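/- If a binary relation ≻ on lotteries over prospects satisfies asymmetry, negative transitivity, independence, and continuity, then there exists a utility function U on prospects such that for all lotteries p̃, q̃ with finite support, p̃ ≻ q̃ if and only if the expected value of U under p̃ exceeds that under q̃; moreover U is unique up to positive affine transformation. -/

import Mathlib

/-- A lottery on a set of prospects `P`: a finitely supported probability
distribution on `P`. -/
structure Lottery (P : Type*) where
  prob : P → ℝ
  nonneg : ∀ x, 0 ≤ prob x
  finite_support : (Function.support prob).Finite
  total : ∑ᶠ x, prob x = 1

/-- `IsMix m α p q` says the lottery `m` is the mixture `α p + (1-α) q`. -/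
def IsMix {P : Type*} (m : Lottery P) (α : ℝ) (p q : Lottery P) : Prop :=
  ∀ x, m.prob x = α * p.prob x + (1 - α) * q.prob x

/-- Expected utility of a lottery with respect to a utility function `U`. -/
noncomputable def expUtility {P : Type*} (U : P → ℝ) (p : Lottery P) : ℝ :=
  ∑ᶠ x, p.prob x * U x

namespace VNM
variable {P : Type*}

theorem Lottery.ext' {p q : Lottery P} (h : ∀ x, p.prob x = q.prob x) : p = q := by
  cases p; cases q; simp only [Lottery.mk.injEq]; exact funext h

theorem smul_support_finite (c : ℝ) (p : Lottery P) :
    (Function.support fun x => c * p.prob x).Finite :=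
  (p.finite_support.subset (by
    intro x hx
    simp only [Function.mem_support] at hx ⊢
    intro h; apply hx; rw [h, mul_zero]))

theorem smul_support_finite' (c : ℝ) (f : P → ℝ) (hf : (Function.support f).Finite) :
    (Function.support fun x => c * f x).Finite :=
  hf.subset (by
    intro x hx
    simp only [Function.mem_support] at hx ⊢
    intro h; apply hx; rw [h, mul_zero])

/-- mixture of two lotteries; junk (= p) if α out of range -/
noncomputable def mix (α : ℝ) (p q : Lottery P) : Lottery P := by
  classical
  exact if h : 0 ≤ α ∧ α ≤ 1 then
    { prob := fun x => α * p.prob x + (1 - α) * q.prob x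
      nonneg := fun x => add_nonneg (mul_nonneg h.1 (p.nonneg x))
        (mul_nonneg (by linarith [h.2]) (q.nonneg x))
      finite_support := ((smul_support_finite α p).union (smul_support_finite (1-α) q)).subset
        (Function.support_add _ _)
      total := by
        rw [finsum_add_distrib (smul_support_finite α p) (smul_support_finite (1-α) q),
          ← mul_finsum _ _, ← mul_finsum _ _,
          p.total, q.total]
        ring }
  else p

theorem mix_prob {α : ℝ} (h0 : 0 ≤ α) (h1 : α ≤ 1) (p q : Lottery P) (x : P) :
    (mix α p q).prob x = α * p.prob x + (1 - α) * q.prob x := by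
  rw [mix, dif_pos ⟨h0, h1⟩]

theorem isMix_mix {α : ℝ} (h0 : 0 ≤ α) (h1 : α ≤ 1) (p q : Lottery P) :
    IsMix (mix α p q) α p q := fun x => mix_prob h0 h1 p q x

theorem _root_.IsMix.eq_mix {m : Lottery P} {α : ℝ} {p q : Lottery P}
    (h : IsMix m α p q) (h0 : 0 ≤ α) (h1 : α ≤ 1) : m = mix α p q :=
  Lottery.ext' fun x => by rw [h x, mix_prob h0 h1]

theorem mix_zero (p q : Lottery P) : mix 0 p q = q :=
  Lottery.ext' fun x => by rw [mix_prob le_rfl zero_le_one]; ring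

theorem mix_one (p q : Lottery P) : mix 1 p q = p :=
  Lottery.ext' fun x => by rw [mix_prob zero_le_one le_rfl]; ring

theorem mix_self {α : ℝ} (h0 : 0 ≤ α) (h1 : α ≤ 1) (p : Lottery P) : mix α p p = p :=
  Lottery.ext' fun x => by rw [mix_prob h0 h1]; ring

theorem mix_comm {α : ℝ} (h0 : 0 ≤ α) (h1 : α ≤ 1) (p q : Lottery P) :
    mix α p q = mix (1 - α) q p :=
  Lottery.ext' fun x => by
    rw [mix_prob h0 h1, mix_prob (by linarith) (by linarith)]; ring

/-- general two-point line combination: mix of two points on the segment [q,p] -/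
theorem mix_line {γ lam μ : ℝ} (hγ0 : 0 ≤ γ) (hγ1 : γ ≤ 1) (hl0 : 0 ≤ lam) (hl1 : lam ≤ 1)
    (hm0 : 0 ≤ μ) (hm1 : μ ≤ 1) (p q : Lottery P) :
    mix γ (mix lam p q) (mix μ p q) = mix (γ * lam + (1 - γ) * μ) p q :=
  Lottery.ext' fun x => by
    rw [mix_prob hγ0 hγ1, mix_prob hl0 hl1, mix_prob hm0 hm1,
      mix_prob (by nlinarith) (by nlinarith)]
    ring


/-- calibration coefficient of `q` within the frame `b ≻ w` -/
noncomputable def Fcal (pref : Lottery P → Lottery P → Prop) (b w q : Lottery P) : ℝ :=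
  letI := Classical.dec (∃ l, 0 ≤ l ∧ l ≤ 1 ∧ ¬ pref q (mix l b w) ∧ ¬ pref (mix l b w) q)
  if h : ∃ l, 0 ≤ l ∧ l ≤ 1 ∧ ¬ pref q (mix l b w) ∧ ¬ pref (mix l b w) q then h.choose else 0

section Pref
set_option linter.unusedSectionVars false
variable {pref : Lottery P → Lottery P → Prop}
variable (asymm : ∀ p q, pref p q → ¬ pref q p)
variable (negTrans : ∀ p q r, ¬ pref p q → ¬ pref q r → ¬ pref p r)
variable (indep : ∀ (α : ℝ), 0 < α → α ≤ 1 → ∀ p q r mp mq,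
      IsMix mp α p r → IsMix mq α q r → pref p q → pref mp mq)
variable (cont : ∀ p q r, pref p q → pref q r →
      ∃ (α β : ℝ) (mα mβ : Lottery P), 0 < α ∧ α < 1 ∧ 0 < β ∧ β < 1 ∧
        IsMix mα α p r ∧ IsMix mβ β p r ∧ pref mα q ∧ pref q mβ)

include asymm negTrans in
theorem ptrans {p q r : Lottery P} (h1 : pref p q) (h2 : pref q r) : pref p r := by
  by_contra h
  exact negTrans p r q h (asymm q r h2) h1

include negTrans in
theorem tr1 {p q r : Lottery P} (h1 : ¬ pref q p) (h2 : pref q r) : pref p r := by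
  by_contra h
  exact negTrans q p r h1 h h2

include negTrans in
theorem tr2 {p q r : Lottery P} (h1 : pref p q) (h2 : ¬ pref r q) : pref p r := by
  by_contra h
  exact negTrans p r q h h2 h1

include indep in
theorem indep' {α : ℝ} (h0 : 0 < α) (h1 : α ≤ 1) {p q : Lottery P} (r : Lottery P)
    (h : pref p q) : pref (mix α p r) (mix α q r) :=
  indep α h0 h1 p q r _ _ (isMix_mix h0.le h1 p r) (isMix_mix h0.le h1 q r) h

include indep in
/-- mixing on the right component -/
theorem indepR {α : ℝ} (h0 : 0 ≤ α) (h1 : α < 1) (p : Lottery P) {q r : Lottery P}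
    (h : pref q r) : pref (mix α p q) (mix α p r) := by
  rw [mix_comm h0 h1.le, mix_comm h0 h1.le p r]
  exact indep' indep (by linarith) (by linarith) p h

include cont in
theorem cont' {p q r : Lottery P} (h1 : pref p q) (h2 : pref q r) :
    ∃ (α β : ℝ), 0 < α ∧ α < 1 ∧ 0 < β ∧ β < 1 ∧
      pref (mix α p r) q ∧ pref q (mix β p r) := by
  obtain ⟨α, β, mα, mβ, hα0, hα1, hβ0, hβ1, hmα, hmβ, h3, h4⟩ := cont p q r h1 h2
  refine ⟨α, β, hα0, hα1, hβ0, hβ1, ?_, ?_⟩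
  · rwa [hmα.eq_mix hα0.le hα1.le] at h3
  · rwa [hmβ.eq_mix hβ0.le hβ1.le] at h4

include indep in
/-- (i): strict mixture lies strictly between -/
theorem between_lt {α : ℝ} (h0 : 0 < α) (h1 : α < 1) {p q : Lottery P} (h : pref p q) :
    pref p (mix α p q) ∧ pref (mix α p q) q := by
  constructor
  · have := indep' indep (α := 1 - α) (by linarith) (by linarith) p h
    rwa [mix_self (by linarith) (by linarith), ← mix_comm h0.le h1.le] at this
  · have := indep' indep h0 h1.le q h
    rwa [mix_self h0.le h1.le] at this

include asymm negTrans indep in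
/-- (b): monotonicity along a segment -/
theorem mono {α β : ℝ} (hβ0 : 0 ≤ β) (hlt : β < α) (hα1 : α ≤ 1)
    {p q : Lottery P} (h : pref p q) : pref (mix α p q) (mix β p q) := by
  have hα0 : 0 < α := lt_of_le_of_lt hβ0 hlt
  have hmq : pref (mix α p q) q := by
    rcases eq_or_lt_of_le hα1 with he | hl
    · rw [he, mix_one]; exact h
    · exact (between_lt indep hα0 hl h).2
  rcases eq_or_lt_of_le hβ0 with he | hb
  · rw [← he, mix_zero]; exact hmq
  · have hba : β / α < 1 := (div_lt_one hα0).2 hlt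
    have hba0 : 0 < β / α := div_pos hb hα0
    have := (between_lt indep hba0 hba hmq).1
    rwa [show mix (β/α) (mix α p q) q = mix β p q by
      have := mix_line (P := P) hba0.le hba.le hα0.le hα1 le_rfl zero_le_one p q
      rw [mix_zero] at this
      rw [this]
      congr 1
      field_simp; ring] at this

/-- mixing two points on a segment: helper identities -/
theorem mix_top {ν lam : ℝ} (hν0 : 0 ≤ ν) (hν1 : ν ≤ 1) (hl0 : 0 ≤ lam) (hl1 : lam ≤ 1)
    (b w : Lottery P) : mix ν b (mix lam b w) = mix (ν + (1 - ν) * lam) b w := by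
  have h := mix_line (P := P) hν0 hν1 zero_le_one le_rfl hl0 hl1 b w
  rw [mix_one] at h
  rw [h]; congr 1; ring

theorem mix_bot {ν lam : ℝ} (hν0 : 0 ≤ ν) (hν1 : ν ≤ 1) (hl0 : 0 ≤ lam) (hl1 : lam ≤ 1)
    (b w : Lottery P) : mix ν (mix lam b w) w = mix (ν * lam) b w := by
  have h := mix_line (P := P) hν0 hν1 hl0 hl1 le_rfl zero_le_one b w
  rw [mix_zero] at h
  rw [h]; congr 1; ring

theorem mix_top' {ν lam : ℝ} (hν0 : 0 ≤ ν) (hν1 : ν ≤ 1) (hl0 : 0 ≤ lam) (hl1 : lam ≤ 1)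
    (b w : Lottery P) : mix ν (mix lam b w) b = mix (ν * lam + 1 - ν) b w := by
  have h := mix_line (P := P) hν0 hν1 hl0 hl1 zero_le_one le_rfl b w
  rw [mix_one] at h
  rw [h]; congr 1; ring

section mixTop
end mixTop

include asymm negTrans indep in
/-- cross monotonicity, common bottom r : if p ~ q and p ≻ r then
`mix κ p r ≻ mix ν q r` whenever `ν < κ`. -/
theorem cross1 {p q r : Lottery P} (hpq : ¬ pref p q) (hqp : ¬ pref q p)
    (hpr : pref p r) {κ ν : ℝ} (hν0 : 0 ≤ ν) (hνκ : ν < κ) (hκ1 : κ ≤ 1) :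
    pref (mix κ p r) (mix ν q r) := by
  have hκ0 : 0 < κ := lt_of_le_of_lt hν0 hνκ
  have hqr : pref q r := tr1 negTrans hpq hpr
  set μ : ℝ := ν / κ with hμ
  have hμ0 : 0 ≤ μ := div_nonneg hν0 hκ0.le
  have hμ1 : μ < 1 := (div_lt_one hκ0).2 hνκ
  -- p ≻ mix μ q r
  have h1 : pref p (mix μ q r) := by
    have h2 : pref q (mix μ q r) := by
      have := mono asymm negTrans indep hμ0 hμ1 le_rfl hqr
      rwa [mix_one] at this
    exact tr1 negTrans hqp h2
  have h3 := indep' indep hκ0 hκ1 r h1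
  rwa [mix_bot hκ0.le hκ1 hμ0 hμ1.le q r, hμ, mul_div_cancel₀ ν (ne_of_gt hκ0)] at h3

include asymm negTrans indep in
/-- cross monotonicity, common top r : if p ~ q and r ≻ p then
`mix κ r p ≻ mix ν r q` whenever `ν < κ < 1`. -/
theorem cross2 {p q r : Lottery P} (hpq : ¬ pref p q) (hqp : ¬ pref q p)
    (hrp : pref r p) {κ ν : ℝ} (hν0 : 0 ≤ ν) (hνκ : ν < κ) (hκ1 : κ < 1) :
    pref (mix κ r p) (mix ν r q) := by
  set lam : ℝ := 1 - ν with hlam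
  set μ : ℝ := (κ - ν) / lam with hμdef
  have hlam0 : 0 < lam := by rw [hlam]; linarith
  have hlam1 : lam ≤ 1 := by rw [hlam]; linarith
  have hμ0 : 0 < μ := div_pos (by linarith) hlam0
  have hμ1 : μ < 1 := (div_lt_one hlam0).2 (by rw [hlam]; linarith)
  have h1 : pref (mix μ r p) q := by
    have h2 : pref (mix μ r p) p := by
      have := mono asymm negTrans indep (le_refl (0:ℝ)) hμ0 hμ1.le hrp
      rwa [mix_zero] at this
    exact tr2 negTrans h2 hqp
  have h3 := indep' indep hlam0 hlam1 r h1
  have e1 : mix lam (mix μ r p) r = mix (lam * μ + 1 - lam) r p :=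
    mix_top' hlam0.le hlam1 hμ0.le hμ1.le r p
  have e2 : mix lam q r = mix (1 - lam) r q := mix_comm hlam0.le hlam1 q r
  rw [e1, e2] at h3
  have e3 : lam * μ + 1 - lam = κ := by
    rw [hμdef]; field_simp; rw [hlam]; ring
  have e4 : 1 - lam = ν := by rw [hlam]; ring
  rwa [e3, e4] at h3

include asymm negTrans indep in
/-- (e): mixing two indifferent lotteries stays indifferent to them -/
theorem indiff_self_mix {p r : Lottery P} (h1 : ¬ pref p r) (h2 : ¬ pref r p)
    {γ : ℝ} (hγ0 : 0 ≤ γ) (hγ1 : γ ≤ 1) :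
    ¬ pref (mix γ p r) p ∧ ¬ pref p (mix γ p r) := by
  rcases eq_or_lt_of_le hγ0 with he | hg0
  · rw [← he, mix_zero]; exact ⟨h2, h1⟩
  rcases eq_or_lt_of_le hγ1 with he | hg1
  · rw [he, mix_one]; exact ⟨fun h => asymm _ _ h h, fun h => asymm _ _ h h⟩
  set s := mix γ p r with hs
  constructor
  · intro hsp
    have hsr : pref s r := tr2 negTrans hsp h2
    have ha : pref (mix γ s r) s := by
      have := indep' indep hg0 hγ1 r hsp
      rwa [← hs] at this
    have hb : pref s (mix γ s r) := (between_lt indep hg0 hg1 hsr).1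
    exact asymm _ _ ha hb
  · intro hps
    have hrs : pref r s := tr1 negTrans h1 hps
    have ha : pref s (mix γ s r) := by
      have := indep' indep hg0 hγ1 r hps
      rwa [← hs] at this
    have hb : pref (mix γ s r) s := by
      have := (between_lt indep (by linarith : (0:ℝ) < 1 - γ) (by linarith) hrs).2
      rwa [← mix_comm hg0.le hγ1] at this
    exact asymm _ _ ha hb

include asymm negTrans indep in
/-- upper closure: mixtures stay below an upper bound -/
theorem mix_ub {p r b : Lottery P} (hb1 : ¬ pref p b) (hb2 : ¬ pref r b)
    {γ : ℝ} (hγ0 : 0 ≤ γ) (hγ1 : γ ≤ 1) : ¬ pref (mix γ p r) b := by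
  rcases eq_or_lt_of_le hγ0 with he | hg0
  · rw [← he, mix_zero]; exact hb2
  rcases eq_or_lt_of_le hγ1 with he | hg1
  · rw [he, mix_one]; exact hb1
  by_cases hpr : pref p r
  · intro hmb
    exact hb1 (ptrans asymm negTrans (between_lt indep hg0 hg1 hpr).1 hmb)
  by_cases hrp : pref r p
  · intro hmb
    apply hb2
    refine ptrans asymm negTrans ?_ hmb
    have := (between_lt indep (by linarith : (0:ℝ) < 1 - γ) (by linarith) hrp).1
    rwa [← mix_comm hg0.le hγ1] at this
  · intro hmb
    exact hb1 (tr1 negTrans (indiff_self_mix asymm negTrans indep hpr hrp hγ0 hγ1).1 hmb)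

include asymm negTrans indep in
/-- lower closure: mixtures stay above a lower bound -/
theorem mix_lb {p r w : Lottery P} (hw1 : ¬ pref w p) (hw2 : ¬ pref w r)
    {γ : ℝ} (hγ0 : 0 ≤ γ) (hγ1 : γ ≤ 1) : ¬ pref w (mix γ p r) := by
  rcases eq_or_lt_of_le hγ0 with he | hg0
  · rw [← he, mix_zero]; exact hw2
  rcases eq_or_lt_of_le hγ1 with he | hg1
  · rw [he, mix_one]; exact hw1
  by_cases hpr : pref p r
  · intro hwm
    exact hw2 (ptrans asymm negTrans hwm (between_lt indep hg0 hg1 hpr).2)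
  by_cases hrp : pref r p
  · intro hwm
    apply hw1
    refine ptrans asymm negTrans hwm ?_
    have := (between_lt indep (by linarith : (0:ℝ) < 1 - γ) (by linarith) hrp).2
    rwa [← mix_comm hg0.le hγ1] at this
  · intro hwm
    exact hw1 (tr2 negTrans hwm (indiff_self_mix asymm negTrans indep hpr hrp hγ0 hγ1).2)

include asymm negTrans indep cont in
/-- (c): calibration lemma. If `b ≻ w` and `b ≽ q ≽ w` then `q` is indifferent
to some mixture of `b` and `w`. -/
theorem calib {b w q : Lottery P} (hbw : pref b w) (hqb : ¬ pref q b) (hwq : ¬ pref w q) :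
    ∃ l, 0 ≤ l ∧ l ≤ 1 ∧ ¬ pref q (mix l b w) ∧ ¬ pref (mix l b w) q := by
  classical
  set S : Set ℝ := {l : ℝ | 0 ≤ l ∧ l ≤ 1 ∧ ¬ pref (mix l b w) q} with hS
  have h0S : (0:ℝ) ∈ S := by
    refine ⟨le_rfl, zero_le_one, ?_⟩
    rw [mix_zero]; exact hwq
  have hne : S.Nonempty := ⟨0, h0S⟩
  have hbdd : BddAbove S := ⟨1, fun x hx => hx.2.1⟩
  set L : ℝ := sSup S with hL
  have hL0 : 0 ≤ L := le_csSup hbdd h0S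
  have hL1 : L ≤ 1 := csSup_le hne (fun x hx => hx.2.1)
  refine ⟨L, hL0, hL1, ?_, ?_⟩
  · -- ¬ q ≻ mix L b w
    intro hq
    have hLlt1 : L < 1 := by
      rcases eq_or_lt_of_le hL1 with he | h
      · exfalso; rw [he, mix_one] at hq; exact hqb hq
      · exact h
    by_cases hbq : pref b q
    · obtain ⟨α, β, hα0, hα1, hβ0, hβ1, _, h4⟩ := cont' cont hbq hq
      -- q ≻ mix β b (mix L b w) = mix (β + (1-β)L) b w
      rw [mix_top hβ0.le hβ1.le hL0 hL1 b w] at h4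
      have hmem : (β + (1 - β) * L) ∈ S := by
        refine ⟨by nlinarith, by nlinarith, asymm _ _ h4⟩
      have := le_csSup hbdd hmem
      nlinarith
    · -- b ~ q
      have hbt : pref b (mix L b w) := tr1 negTrans hqb hq
      set M : ℝ := (L + 1) / 2 with hM
      have hM1 : M < 1 := by rw [hM]; linarith
      have hML : L < M := by rw [hM]; linarith
      have hbM : pref b (mix M b w) := by
        have := mono asymm negTrans indep (by linarith : (0:ℝ) ≤ M) hM1 le_rfl hbw
        rwa [mix_one] at this
      have hqM : pref q (mix M b w) := tr1 negTrans hbq hbM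
      have hmem : M ∈ S := ⟨by linarith, hM1.le, asymm _ _ hqM⟩
      have := le_csSup hbdd hmem
      linarith
  · -- ¬ mix L b w ≻ q
    intro ht
    have hL0' : 0 < L := by
      rcases eq_or_lt_of_le hL0 with he | h
      · exfalso; rw [← he, mix_zero] at ht; exact hwq ht
      · exact h
    by_cases hqw : pref q w
    · obtain ⟨α, β, hα0, hα1, hβ0, hβ1, h3, _⟩ := cont' cont ht hqw
      -- mix α (mix L b w) w ≻ q, i.e. mix (α L) b w ≻ q
      rw [mix_bot hα0.le hα1.le hL0 hL1 b w] at h3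
      have hlt : α * L < L := by nlinarith
      obtain ⟨x, hxS, hx⟩ := exists_lt_of_lt_csSup hne (by rw [← hL]; exact hlt)
      have hmono : pref (mix x b w) (mix (α * L) b w) :=
        mono asymm negTrans indep (by nlinarith) hx hxS.2.1 hbw
      exact hxS.2.2 (ptrans asymm negTrans hmono h3)
    · -- q ~ w
      obtain ⟨x, hxS, hx⟩ := exists_lt_of_lt_csSup hne (by rw [← hL]; exact hL0')
      have hxw : pref (mix x b w) w := by
        have := mono asymm negTrans indep le_rfl hx hxS.2.1 hbw
        rwa [mix_zero] at this
      exact hxS.2.2 (tr2 negTrans hxw hqw)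

include asymm negTrans indep cont in
/-- one direction of the substitution lemma, case `p ≻ r` -/
theorem dcase1 {p q r : Lottery P} (hpq : ¬ pref p q) (hqp : ¬ pref q p)
    (hpr : pref p r) {γ : ℝ} (hγ0 : 0 < γ) (hγ1 : γ < 1) :
    ¬ pref (mix γ q r) (mix γ p r) := by
  intro hn
  have hqr : pref q r := tr1 negTrans hpq hpr
  have hpm : pref p (mix γ p r) := (between_lt indep hγ0 hγ1 hpr).1
  have hmr : pref (mix γ p r) r := (between_lt indep hγ0 hγ1 hpr).2
  have hqm : pref q (mix γ p r) := tr1 negTrans hpq hpm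
  obtain ⟨β, hβ0, hβ1, hc1, hc2⟩ :=
    calib asymm negTrans indep cont hqr (asymm _ _ hqm) (asymm _ _ hmr)
  -- hc1 : ¬ (mix γ p r) ≻ mix β q r ; hc2 : ¬ mix β q r ≻ mix γ p r
  have hβγ : β < γ := by
    rcases lt_trichotomy β γ with h | h | h
    · exact h
    · exfalso; exact hc2 (by rw [h]; exact hn)
    · exfalso
      have := mono asymm negTrans indep (by linarith : (0:ℝ) ≤ γ) h hβ1 hqr
      exact hc2 (ptrans asymm negTrans this hn)
  set ν : ℝ := (β + γ) / 2 with hν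
  have h5 : pref (mix ν q r) (mix β q r) :=
    mono asymm negTrans indep hβ0 (by rw [hν]; linarith) (by rw [hν]; linarith) hqr
  have h6 : pref (mix ν q r) (mix γ p r) := tr2 negTrans h5 hc1
  have h7 : pref (mix γ p r) (mix ν q r) :=
    cross1 asymm negTrans indep hpq hqp hpr (by rw [hν]; linarith)
      (by rw [hν]; linarith) hγ1.le
  exact asymm _ _ h6 h7

include asymm negTrans indep cont in
/-- one direction of the substitution lemma, case `r ≻ p` -/
theorem dcase2 {p q r : Lottery P} (hpq : ¬ pref p q) (hqp : ¬ pref q p)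
    (hrp : pref r p) {γ : ℝ} (hγ0 : 0 < γ) (hγ1 : γ < 1) :
    ¬ pref (mix γ q r) (mix γ p r) := by
  intro hn
  rw [mix_comm hγ0.le hγ1.le q r, mix_comm hγ0.le hγ1.le p r] at hn
  -- hn : mix (1-γ) r q ≻ mix (1-γ) r p
  have hrq : pref r q := tr2 negTrans hrp hqp
  have hrm : pref r (mix (1-γ) r p) := by
    have := (between_lt indep (by linarith : (0:ℝ) < 1 - γ) (by linarith) hrp).1
    exact this
  have hmp : pref (mix (1-γ) r p) p := (between_lt indep (by linarith) (by linarith) hrp).2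
  have hmq : pref (mix (1-γ) r p) q := tr2 negTrans hmp hqp
  obtain ⟨β, hβ0, hβ1, hc1, hc2⟩ :=
    calib asymm negTrans indep cont hrq (asymm _ _ hrm) (asymm _ _ hmq)
  -- (mix (1-γ) r p) ~ mix β r q
  have hβγ : β < 1 - γ := by
    rcases lt_trichotomy β (1-γ) with h | h | h
    · exact h
    · exfalso; exact hc2 (by rw [h]; exact hn)
    · exfalso
      have := mono asymm negTrans indep (by linarith : (0:ℝ) ≤ 1 - γ) h hβ1 hrq
      exact hc2 (ptrans asymm negTrans this hn)
  set ν : ℝ := (β + (1-γ)) / 2 with hν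
  have h5 : pref (mix ν r q) (mix β r q) :=
    mono asymm negTrans indep hβ0 (by rw [hν]; linarith) (by rw [hν]; linarith) hrq
  have h6 : pref (mix ν r q) (mix (1-γ) r p) := tr2 negTrans h5 hc1
  have h7 : pref (mix (1-γ) r p) (mix ν r q) :=
    cross2 asymm negTrans indep hpq hqp hrp (by rw [hν]; linarith)
      (by rw [hν]; linarith) (by linarith)
  exact asymm _ _ h6 h7

include asymm negTrans indep cont in
/-- (d): substitution of indifferent lotteries inside mixtures -/
theorem subst {p q r : Lottery P} (hpq : ¬ pref p q) (hqp : ¬ pref q p)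
    {γ : ℝ} (hγ0 : 0 ≤ γ) (hγ1 : γ ≤ 1) :
    ¬ pref (mix γ p r) (mix γ q r) ∧ ¬ pref (mix γ q r) (mix γ p r) := by
  rcases eq_or_lt_of_le hγ0 with he | hg0
  · rw [← he, mix_zero, mix_zero]; exact ⟨fun h => asymm _ _ h h, fun h => asymm _ _ h h⟩
  rcases eq_or_lt_of_le hγ1 with he | hg1
  · rw [he, mix_one, mix_one]; exact ⟨hpq, hqp⟩
  by_cases hpr : pref p r
  · have hqr : pref q r := tr1 negTrans hpq hpr
    exact ⟨dcase1 asymm negTrans indep cont hqp hpq hqr hg0 hg1,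
      dcase1 asymm negTrans indep cont hpq hqp hpr hg0 hg1⟩
  by_cases hrp : pref r p
  · have hrq : pref r q := tr2 negTrans hrp hqp
    exact ⟨dcase2 asymm negTrans indep cont hqp hpq hrq hg0 hg1,
      dcase2 asymm negTrans indep cont hpq hqp hrp hg0 hg1⟩
  · -- p ~ r and hence q ~ r
    have hqr : ¬ pref q r := negTrans q p r hqp hpr
    have hrq : ¬ pref r q := negTrans r p q hrp hpq
    have e1 := indiff_self_mix asymm negTrans indep hpr hrp hγ0 hγ1
    have e2 := indiff_self_mix asymm negTrans indep hqr hrq hγ0 hγ1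
    constructor
    · intro h
      -- mix γ p r ≻ mix γ q r, but mix γ p r ~ p ~ q ~ mix γ q r
      have h1 : pref p (mix γ q r) := tr1 negTrans e1.1 h
      have h2 : pref p q := tr2 negTrans h1 e2.2
      exact hpq h2
    · intro h
      have h1 : pref q (mix γ p r) := tr1 negTrans e2.1 h
      have h2 : pref q p := tr2 negTrans h1 e1.2
      exact hqp h2

include negTrans in
theorem ind_trans {p q r : Lottery P} (h1 : ¬ pref p q) (h2 : ¬ pref q p)
    (h3 : ¬ pref q r) (h4 : ¬ pref r q) : ¬ pref p r ∧ ¬ pref r p :=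
  ⟨negTrans p q r h1 h3, negTrans r q p h4 h2⟩

include asymm negTrans indep cont in
theorem Fcal_spec {b w q : Lottery P} (hbw : pref b w) (hqb : ¬ pref q b) (hwq : ¬ pref w q) :
    0 ≤ Fcal pref b w q ∧ Fcal pref b w q ≤ 1 ∧
      ¬ pref q (mix (Fcal pref b w q) b w) ∧ ¬ pref (mix (Fcal pref b w q) b w) q := by
  have h : ∃ l, 0 ≤ l ∧ l ≤ 1 ∧ ¬ pref q (mix l b w) ∧ ¬ pref (mix l b w) q := by
    obtain ⟨l, h1, h2, h3, h4⟩ := calib asymm negTrans indep cont hbw hqb hwq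
    exact ⟨l, h1, h2, h3, h4⟩
  rw [Fcal, dif_pos h]
  exact h.choose_spec

include asymm negTrans indep cont in
theorem Fcal_lt {b w q r : Lottery P} (hbw : pref b w) (hqb : ¬ pref q b) (hwq : ¬ pref w q)
    (hrb : ¬ pref r b) (hwr : ¬ pref w r) :
    (pref q r ↔ Fcal pref b w r < Fcal pref b w q) := by
  obtain ⟨hq0, hq1, hq2, hq3⟩ := Fcal_spec asymm negTrans indep cont hbw hqb hwq
  obtain ⟨hr0, hr1, hr2, hr3⟩ := Fcal_spec asymm negTrans indep cont hbw hrb hwr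
  constructor
  · intro hqr
    rcases lt_trichotomy (Fcal pref b w r) (Fcal pref b w q) with h | h | h
    · exact h
    · exfalso
      have h1 : pref (mix (Fcal pref b w q) b w) r := tr1 negTrans hq2 hqr
      rw [← h] at h1
      exact hr3 h1
    · exfalso
      have h1 : pref (mix (Fcal pref b w r) b w) (mix (Fcal pref b w q) b w) :=
        mono asymm negTrans indep hq0 h hr1 hbw
      have h2 : pref r (mix (Fcal pref b w q) b w) := tr1 negTrans hr3 h1
      have h3 : pref r q := tr2 negTrans h2 hq2
      exact asymm _ _ hqr h3
  · intro hlt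
    have h1 : pref (mix (Fcal pref b w q) b w) (mix (Fcal pref b w r) b w) :=
      mono asymm negTrans indep hr0 hlt hq1 hbw
    have h2 : pref q (mix (Fcal pref b w r) b w) := tr1 negTrans hq3 h1
    exact tr2 negTrans h2 hr2

include asymm negTrans indep cont in
theorem Fcal_unique {b w m : Lottery P} {c : ℝ} (hbw : pref b w) (hmb : ¬ pref m b)
    (hwm : ¬ pref w m) (hc0 : 0 ≤ c) (hc1 : c ≤ 1)
    (h1 : ¬ pref m (mix c b w)) (h2 : ¬ pref (mix c b w) m) :
    Fcal pref b w m = c := by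
  obtain ⟨hm0, hm1, hm2, hm3⟩ := Fcal_spec asymm negTrans indep cont hbw hmb hwm
  rcases lt_trichotomy (Fcal pref b w m) c with h | h | h
  · exfalso
    have h3 : pref (mix c b w) (mix (Fcal pref b w m) b w) :=
      mono asymm negTrans indep hm0 h hc1 hbw
    exact h2 (tr2 negTrans h3 hm2)
  · exact h
  · exfalso
    have h3 : pref (mix (Fcal pref b w m) b w) (mix c b w) :=
      mono asymm negTrans indep hc0 h hm1 hbw
    exact h1 (tr1 negTrans hm3 h3)

include asymm negTrans indep cont in
theorem Fcal_affine {b w q r : Lottery P} (hbw : pref b w) (hqb : ¬ pref q b)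
    (hwq : ¬ pref w q) (hrb : ¬ pref r b) (hwr : ¬ pref w r)
    {γ : ℝ} (hγ0 : 0 ≤ γ) (hγ1 : γ ≤ 1) :
    Fcal pref b w (mix γ q r) = γ * Fcal pref b w q + (1 - γ) * Fcal pref b w r := by
  obtain ⟨hq0, hq1, hq2, hq3⟩ := Fcal_spec asymm negTrans indep cont hbw hqb hwq
  obtain ⟨hr0, hr1, hr2, hr3⟩ := Fcal_spec asymm negTrans indep cont hbw hrb hwr
  set Fq := Fcal pref b w q
  set Fr := Fcal pref b w r
  have hmb : ¬ pref (mix γ q r) b := mix_ub asymm negTrans indep hqb hrb hγ0 hγ1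
  have hwm : ¬ pref w (mix γ q r) := mix_lb asymm negTrans indep hwq hwr hγ0 hγ1
  -- step 1: mix γ q r ~ mix γ (mix Fq b w) r
  have s1 := subst asymm negTrans indep cont (r := r) hq2 hq3 hγ0 hγ1
  -- step 2: mix γ (mix Fq b w) r ~ mix γ (mix Fq b w) (mix Fr b w)
  have s2 : ¬ pref (mix γ (mix Fq b w) r) (mix γ (mix Fq b w) (mix Fr b w)) ∧
      ¬ pref (mix γ (mix Fq b w) (mix Fr b w)) (mix γ (mix Fq b w) r) := by
    have h := subst asymm negTrans indep cont (r := mix Fq b w) hr2 hr3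
      (by linarith : (0:ℝ) ≤ 1 - γ) (by linarith)
    rw [mix_comm hγ0 hγ1 (mix Fq b w) r,
      mix_comm hγ0 hγ1 (mix Fq b w) (mix Fr b w)]
    exact ⟨h.1, h.2⟩
  have e3 : mix γ (mix Fq b w) (mix Fr b w) = mix (γ * Fq + (1 - γ) * Fr) b w :=
    mix_line hγ0 hγ1 hq0 hq1 hr0 hr1 b w
  rw [e3] at s2
  have hch := ind_trans negTrans s1.1 s1.2 s2.1 s2.2
  exact Fcal_unique asymm negTrans indep cont hbw hmb hwm (by nlinarith) (by nlinarith)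
    hch.1 hch.2

include asymm negTrans indep cont in
/-- the gluing lemma: normalized calibration values agree across enclosing frames -/
theorem glue {b w b' w' x L0 L1 : Lottery P} (hbw : pref b w) (hb'w' : pref b' w')
    (hbb' : ¬ pref b b') (hw'w : ¬ pref w' w)
    (hxb : ¬ pref x b) (hwx : ¬ pref w x)
    (h0b : ¬ pref L0 b) (hw0 : ¬ pref w L0)
    (h1b : ¬ pref L1 b) (hw1 : ¬ pref w L1) (h01 : pref L1 L0) :
    (Fcal pref b' w' x - Fcal pref b' w' L0) / (Fcal pref b' w' L1 - Fcal pref b' w' L0)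
      = (Fcal pref b w x - Fcal pref b w L0) / (Fcal pref b w L1 - Fcal pref b w L0) := by
  have hw'b : ¬ pref w' b := fun h => hw'w (ptrans asymm negTrans h hbw)
  have hwb' : ¬ pref w b' := fun h => hbb' (ptrans asymm negTrans hbw h)
  -- embedding of inner-calibrated values into the outer frame
  have embed : ∀ z : Lottery P, ¬ pref z b → ¬ pref w z →
      Fcal pref b' w' z = Fcal pref b w z * Fcal pref b' w' b
        + (1 - Fcal pref b w z) * Fcal pref b' w' w := by
    intro z hzb hwz
    have hzb' : ¬ pref z b' := fun h => hzb (tr2 negTrans h hbb')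
    have hw'z : ¬ pref w' z := fun h => hwz (tr1 negTrans hw'w h)
    obtain ⟨hz0, hz1, hz2, hz3⟩ := Fcal_spec asymm negTrans indep cont hbw hzb hwz
    set Fz := Fcal pref b w z
    have htub : ¬ pref (mix Fz b w) b' := mix_ub asymm negTrans indep hbb' hwb' hz0 hz1
    have htlb : ¬ pref w' (mix Fz b w) := mix_lb asymm negTrans indep hw'b hw'w hz0 hz1
    have hcongr : Fcal pref b' w' z = Fcal pref b' w' (mix Fz b w) := by
      rcases lt_trichotomy (Fcal pref b' w' z) (Fcal pref b' w' (mix Fz b w)) with h | h | h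
      · exfalso
        exact hz3 ((Fcal_lt asymm negTrans indep cont hb'w' htub htlb hzb' hw'z).2 h)
      · exact h
      · exfalso
        exact hz2 ((Fcal_lt asymm negTrans indep cont hb'w' hzb' hw'z htub htlb).2 h)
    rw [hcongr, Fcal_affine asymm negTrans indep cont hb'w' hbb' hw'b hwb' hw'w hz0 hz1]
  have ex := embed x hxb hwx
  have e0 := embed L0 h0b hw0
  have e1 := embed L1 h1b hw1
  have hd : Fcal pref b' w' w < Fcal pref b' w' b :=
    (Fcal_lt asymm negTrans indep cont hb'w' hbb' hw'b hwb' hw'w).1 hbw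
  have hD : Fcal pref b w L0 < Fcal pref b w L1 :=
    (Fcal_lt asymm negTrans indep cont hbw h1b hw1 h0b hw0).1 h01
  have hdd : Fcal pref b' w' b - Fcal pref b' w' w ≠ 0 := by linarith
  have n1 : Fcal pref b' w' x - Fcal pref b' w' L0
      = (Fcal pref b w x - Fcal pref b w L0) * (Fcal pref b' w' b - Fcal pref b' w' w) := by
    rw [ex, e0]; ring
  have n2 : Fcal pref b' w' L1 - Fcal pref b' w' L0
      = (Fcal pref b w L1 - Fcal pref b w L0) * (Fcal pref b' w' b - Fcal pref b' w' w) := by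
    rw [e1, e0]; ring
  rw [n1, n2, mul_div_mul_right _ _ hdd]

include asymm negTrans in
theorem pairTop : ∀ x y : Lottery P, ∃ b, (b = x ∨ b = y) ∧ ¬ pref x b ∧ ¬ pref y b := by
  intro x y
  by_cases h : pref x y
  · exact ⟨x, Or.inl rfl, fun hh => asymm _ _ hh hh, asymm _ _ h⟩
  · exact ⟨y, Or.inr rfl, h, fun hh => asymm _ _ hh hh⟩

include asymm negTrans in
theorem pairBot : ∀ x y : Lottery P, ∃ w, (w = x ∨ w = y) ∧ ¬ pref w x ∧ ¬ pref w y := by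
  intro x y
  by_cases h : pref x y
  · exact ⟨y, Or.inr rfl, asymm _ _ h, fun hh => asymm _ _ hh hh⟩
  · exact ⟨x, Or.inl rfl, fun hh => asymm _ _ hh hh, h⟩

include asymm negTrans in
theorem tripleTop (L0 L1 : Lottery P) :
    ∀ q : Lottery P, ∃ b, (b = L0 ∨ b = L1 ∨ b = q) ∧ ¬ pref L0 b ∧ ¬ pref L1 b ∧ ¬ pref q b := by
  intro q
  obtain ⟨c, hc, h0, h1⟩ := pairTop asymm negTrans L0 L1
  obtain ⟨b, hb, hcb, hqb⟩ := pairTop asymm negTrans c q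
  refine ⟨b, ?_, negTrans _ _ _ h0 hcb, negTrans _ _ _ h1 hcb, hqb⟩
  rcases hb with rfl | rfl
  · rcases hc with rfl | rfl
    · exact Or.inl rfl
    · exact Or.inr (Or.inl rfl)
  · exact Or.inr (Or.inr rfl)

include asymm negTrans in
theorem tripleBot (L0 L1 : Lottery P) :
    ∀ q : Lottery P, ∃ w, (w = L0 ∨ w = L1 ∨ w = q) ∧ ¬ pref w L0 ∧ ¬ pref w L1 ∧ ¬ pref w q := by
  intro q
  obtain ⟨c, hc, h0, h1⟩ := pairBot asymm negTrans L0 L1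
  obtain ⟨w, hw, hwc, hwq⟩ := pairBot asymm negTrans c q
  refine ⟨w, ?_, negTrans _ _ _ hwc h0, negTrans _ _ _ hwc h1, hwq⟩
  rcases hw with rfl | rfl
  · rcases hc with rfl | rfl
    · exact Or.inl rfl
    · exact Or.inr (Or.inl rfl)
  · exact Or.inr (Or.inr rfl)

include asymm negTrans indep cont in
/-- master lemma: existence of an affine order-reflecting utility on lotteries -/
theorem exists_u {L0 L1 : Lottery P} (h01 : pref L1 L0) :
    ∃ u : Lottery P → ℝ,
      (∀ q r, pref q r ↔ u r < u q) ∧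
      (∀ (γ : ℝ) (q r : Lottery P), 0 ≤ γ → γ ≤ 1 →
        u (mix γ q r) = γ * u q + (1 - γ) * u r) ∧
      u L0 = 0 ∧ u L1 = 1 := by
  classical
  choose B hBmem hB0 hB1 hBq using tripleTop asymm negTrans L0 L1
  choose W hWmem hW0 hW1 hWq using tripleBot asymm negTrans L0 L1
  have hBW : ∀ q, pref (B q) (W q) := fun q =>
    tr2 negTrans (tr1 negTrans (hB1 q) h01) (hW0 q)
  set u : Lottery P → ℝ := fun q =>
    (Fcal pref (B q) (W q) q - Fcal pref (B q) (W q) L0) /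
      (Fcal pref (B q) (W q) L1 - Fcal pref (B q) (W q) L0) with hu
  -- key: u can be computed in any enclosing frame
  have key : ∀ (q b w : Lottery P), pref b w →
      (¬ pref L0 b) → (¬ pref L1 b) → (¬ pref q b) →
      (¬ pref w L0) → (¬ pref w L1) → (¬ pref w q) →
      u q = (Fcal pref b w q - Fcal pref b w L0) /
        (Fcal pref b w L1 - Fcal pref b w L0) := by
    intro q b w hbw h0b h1b hqb hw0 hw1 hwq
    have hbb' : ¬ pref (B q) b := by
      rcases hBmem q with h | h | h <;> rw [h]
      exacts [h0b, h1b, hqb]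
    have hw'w : ¬ pref w (W q) := by
      rcases hWmem q with h | h | h <;> rw [h]
      exacts [hw0, hw1, hwq]
    rw [hu]
    exact (glue asymm negTrans indep cont (hBW q) hbw hbb' hw'w
      (hBq q) (hWq q) (hB0 q) (hW0 q) (hB1 q) (hW1 q) h01).symm
  -- common frames for pairs
  have quad : ∀ q r : Lottery P, ∃ b w, pref b w ∧
      (¬ pref L0 b ∧ ¬ pref L1 b ∧ ¬ pref q b ∧ ¬ pref r b) ∧
      (¬ pref w L0 ∧ ¬ pref w L1 ∧ ¬ pref w q ∧ ¬ pref w r) := by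
    intro q r
    obtain ⟨b1, _, g0, g1, gq⟩ := tripleTop asymm negTrans L0 L1 q
    obtain ⟨b, hb, hb1b, hrb⟩ := pairTop asymm negTrans b1 r
    obtain ⟨w1, _, f0, f1, fq⟩ := tripleBot asymm negTrans L0 L1 q
    obtain ⟨w, hw, hww1, hwr⟩ := pairBot asymm negTrans w1 r
    have h0b := negTrans _ _ _ g0 hb1b
    have h1b := negTrans _ _ _ g1 hb1b
    have hqb := negTrans _ _ _ gq hb1b
    have hw0 := negTrans _ _ _ hww1 f0
    have hw1 := negTrans _ _ _ hww1 f1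
    have hwq := negTrans _ _ _ hww1 fq
    exact ⟨b, w, tr2 negTrans (tr1 negTrans h1b h01) hw0,
      ⟨h0b, h1b, hqb, hrb⟩, ⟨hw0, hw1, hwq, hwr⟩⟩
  have hDpos : ∀ b w : Lottery P, pref b w → ¬ pref L0 b → ¬ pref L1 b →
      ¬ pref w L0 → ¬ pref w L1 →
      Fcal pref b w L0 < Fcal pref b w L1 := by
    intro b w hbw h0b h1b hw0 hw1
    exact (Fcal_lt asymm negTrans indep cont hbw h1b hw1 h0b hw0).1 h01
  refine ⟨u, ?_, ?_, ?_, ?_⟩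
  · -- order reflection
    intro q r
    obtain ⟨b, w, hbw, ⟨h0b, h1b, hqb, hrb⟩, ⟨hw0, hw1, hwq, hwr⟩⟩ := quad q r
    rw [key q b w hbw h0b h1b hqb hw0 hw1 hwq,
      key r b w hbw h0b h1b hrb hw0 hw1 hwr]
    have hD := hDpos b w hbw h0b h1b hw0 hw1
    rw [div_lt_div_iff_of_pos_right (by linarith)]
    constructor
    · intro h
      have := (Fcal_lt asymm negTrans indep cont hbw hqb hwq hrb hwr).1 h
      linarith
    · intro h
      exact (Fcal_lt asymm negTrans indep cont hbw hqb hwq hrb hwr).2 (by linarith)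
  · -- affinity
    intro γ q r hγ0 hγ1
    obtain ⟨b, w, hbw, ⟨h0b, h1b, hqb, hrb⟩, ⟨hw0, hw1, hwq, hwr⟩⟩ := quad q r
    have hmb : ¬ pref (mix γ q r) b := mix_ub asymm negTrans indep hqb hrb hγ0 hγ1
    have hwm : ¬ pref w (mix γ q r) := mix_lb asymm negTrans indep hwq hwr hγ0 hγ1
    rw [key (mix γ q r) b w hbw h0b h1b hmb hw0 hw1 hwm,
      key q b w hbw h0b h1b hqb hw0 hw1 hwq,
      key r b w hbw h0b h1b hrb hw0 hw1 hwr,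
      Fcal_affine asymm negTrans indep cont hbw hqb hwq hrb hwr hγ0 hγ1]
    have hD := hDpos b w hbw h0b h1b hw0 hw1
    have hDD : Fcal pref b w L1 - Fcal pref b w L0 ≠ 0 := by linarith
    field_simp
    ring
  · -- u L0 = 0
    rw [hu]; simp
  · -- u L1 = 1
    rw [hu]; simp only
    have hD := hDpos (B L1) (W L1) (hBW L1) (hB0 L1) (hB1 L1) (hW0 L1) (hW1 L1)
    rw [div_self (by linarith)]

include asymm negTrans in
/-- any two affine order-reflecting utility functionals are positive affine
transformations of each other -/
theorem unique_affine {L0 L1 : Lottery P} (h01 : pref L1 L0)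
    {u v : Lottery P → ℝ}
    (hu_ord : ∀ q r, pref q r ↔ u r < u q)
    (hu_aff : ∀ (γ : ℝ) (q r : Lottery P), 0 ≤ γ → γ ≤ 1 →
      u (mix γ q r) = γ * u q + (1 - γ) * u r)
    (hu0 : u L0 = 0) (hu1 : u L1 = 1)
    (hv_ord : ∀ q r, pref q r ↔ v r < v q)
    (hv_aff : ∀ (γ : ℝ) (q r : Lottery P), 0 ≤ γ → γ ≤ 1 →
      v (mix γ q r) = γ * v q + (1 - γ) * v r) :
    ∀ q, v q = v L0 + (v L1 - v L0) * u q := by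
  intro q
  obtain ⟨b, hbmem, hb0, hb1, hbq⟩ := tripleTop asymm negTrans L0 L1 q
  obtain ⟨w, hwmem, hw0, hw1, hwq⟩ := tripleBot asymm negTrans L0 L1 q
  have hbw : pref b w := tr2 negTrans (tr1 negTrans hb1 h01) hw0
  have hwb : u w < u b := (hu_ord b w).1 hbw
  have hD : u b - u w ≠ 0 := by linarith
  have step : ∀ z, ¬ pref z b → ¬ pref w z →
      v z = v w + (v b - v w) * ((u z - u w) / (u b - u w)) := by
    intro z hzb hwz
    have huz1 : u z ≤ u b := not_lt.1 (fun h => hzb ((hu_ord z b).2 h))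
    have huz0 : u w ≤ u z := not_lt.1 (fun h => hwz ((hu_ord w z).2 h))
    set τ : ℝ := (u z - u w) / (u b - u w) with hτ
    have hτ0 : 0 ≤ τ := div_nonneg (by linarith) (by linarith)
    have hτ1 : τ ≤ 1 := by
      rw [hτ, div_le_one (by linarith)]; linarith
    have hum : u (mix τ b w) = u z := by
      rw [hu_aff τ b w hτ0 hτ1, hτ]
      field_simp
      ring
    have hind1 : ¬ pref z (mix τ b w) := fun h => by
      have := (hu_ord z (mix τ b w)).1 h
      rw [hum] at this
      exact lt_irrefl _ this
    have hind2 : ¬ pref (mix τ b w) z := fun h => by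
      have := (hu_ord (mix τ b w) z).1 h
      rw [hum] at this
      exact lt_irrefl _ this
    have hveq : v z = v (mix τ b w) :=
      le_antisymm (not_lt.1 (fun h => hind1 ((hv_ord z (mix τ b w)).2 h)))
        (not_lt.1 (fun h => hind2 ((hv_ord (mix τ b w) z).2 h)))
    rw [hveq, hv_aff τ b w hτ0 hτ1]
    ring
  have eq := step q hbq hwq
  have e0 := step L0 hb0 hw0
  have e1 := step L1 hb1 hw1
  rw [hu0] at e0
  rw [hu1] at e1
  rw [eq, e0, e1]
  field_simp
  ring

end Pref

theorem support_finite_mulU (p : Lottery P) (U : P → ℝ) :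
    (Function.support fun x => p.prob x * U x).Finite :=
  p.finite_support.subset (by
    intro x hx
    simp only [Function.mem_support] at hx ⊢
    intro h; exact hx (by rw [h, zero_mul]))

open Classical in
noncomputable def dirac (x : P) : Lottery P where
  prob := fun y => if y = x then 1 else 0
  nonneg := fun y => by split <;> norm_num
  finite_support := Set.Finite.subset (Set.finite_singleton x) (by
    intro y hy
    simp only [Function.mem_support] at hy
    by_contra h
    simp only [Set.mem_singleton_iff] at h
    exact hy (if_neg h))
  total := by
    rw [finsum_eq_single _ x (fun y hy => if_neg hy)]
    simp

theorem expUtility_dirac (U : P → ℝ) (x : P) : expUtility U (dirac x) = U x := by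
  rw [expUtility, finsum_eq_single _ x]
  · simp [dirac]
  · intro y hy
    simp [dirac, if_neg hy]

theorem expUtility_mix (U : P → ℝ) {γ : ℝ} (h0 : 0 ≤ γ) (h1 : γ ≤ 1) (p q : Lottery P) :
    expUtility U (mix γ p q) = γ * expUtility U p + (1 - γ) * expUtility U q := by
  rw [expUtility, expUtility, expUtility]
  have e : ∀ x, (mix γ p q).prob x * U x
      = γ * (p.prob x * U x) + (1 - γ) * (q.prob x * U x) := by
    intro x; rw [mix_prob h0 h1]; ring
  rw [finsum_congr e, finsum_add_distrib (smul_support_finite' γ _ (support_finite_mulU p U))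
    (smul_support_finite' (1-γ) _ (support_finite_mulU q U)),
    ← mul_finsum _ _, ← mul_finsum _ _]

theorem expUtility_affine (U : P → ℝ) (a b : ℝ) (p : Lottery P) :
    expUtility (fun x => a + b * U x) p = a + b * expUtility U p := by
  rw [expUtility, expUtility]
  have e : ∀ x, p.prob x * (a + b * U x)
      = a * p.prob x + b * (p.prob x * U x) := by intro x; ring
  rw [finsum_congr e, finsum_add_distrib (smul_support_finite' a _ p.finite_support)
    (smul_support_finite' b _ (support_finite_mulU p U)),
    ← mul_finsum _ _, ← mul_finsum _ _, p.total,
    mul_one]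

theorem expUtility_zero (p : Lottery P) : expUtility (fun _ => (0:ℝ)) p = 0 := by
  rw [expUtility]
  exact finsum_eq_zero_of_forall_eq_zero (fun x => by simp)

/-- decomposition of the expected utility of a lottery via an affine functional -/
theorem exp_rep {u : Lottery P → ℝ}
    (haff : ∀ (γ : ℝ) (q r : Lottery P), 0 ≤ γ → γ ≤ 1 →
      u (mix γ q r) = γ * u q + (1 - γ) * u r) :
    ∀ p : Lottery P, expUtility (fun x => u (dirac x)) p = u p := by
  classical
  set U : P → ℝ := fun x => u (dirac x) with hU
  have main : ∀ (n : ℕ) (p : Lottery P), p.finite_support.toFinset.card ≤ n →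
      expUtility U p = u p := by
    intro n
    induction n with
    | zero =>
      intro p hp
      exfalso
      have hsupp : p.finite_support.toFinset = ∅ := Finset.card_eq_zero.1 (Nat.le_zero.1 hp)
      have hall : ∀ x, p.prob x = 0 := by
        intro x
        by_contra h
        have hmem : x ∈ p.finite_support.toFinset := by
          rw [Set.Finite.mem_toFinset]; exact h
        rw [hsupp] at hmem; exact absurd hmem (Finset.notMem_empty x)
      have htot := p.total
      rw [finsum_eq_zero_of_forall_eq_zero hall] at htot
      norm_num at htot
    | succ n ih =>
      intro p hp
      -- pick a point in the support
      have hne : ∃ x, p.prob x ≠ 0 := by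
        by_contra h
        push_neg at h
        have htot := p.total
        rw [finsum_eq_zero_of_forall_eq_zero h] at htot
        norm_num at htot
      obtain ⟨x, hx⟩ := hne
      have hx0 : 0 < p.prob x := lt_of_le_of_ne (p.nonneg x) (Ne.symm hx)
      set a := p.prob x with ha
      -- the residual mass function
      set g : P → ℝ := fun z => if z = x then 0 else p.prob z with hg
      have hgsupp : (Function.support g).Finite := p.finite_support.subset (by
        intro z hz
        simp only [Function.mem_support, hg] at hz ⊢
        intro h; apply hz; split <;> simp [h])
      have hgsum : ∑ᶠ z, g z = 1 - a := by
        have e : ∀ z, p.prob z = (if z = x then a else 0) + g z := by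
          intro z
          rw [hg]
          by_cases h : z = x <;> simp [h, ha]
        have hfin : (Function.support fun z => if z = x then a else 0).Finite :=
          Set.Finite.subset (Set.finite_singleton x) (by
            intro z hz
            simp only [Function.mem_support] at hz
            by_contra h
            simp only [Set.mem_singleton_iff] at h
            exact hz (if_neg h))
        have htot := p.total
        rw [finsum_congr e, finsum_add_distrib hfin hgsupp,
          finsum_eq_single _ x (fun y hy => if_neg hy), if_pos rfl] at htot
        linarith
      have ha1 : a ≤ 1 := by
        have := single_le_finsum x p.finite_support (fun z => p.nonneg z)
        rw [p.total] at this
        exact this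
      by_cases haone : a = 1
      · -- p is the dirac lottery at x
        have hpd : p = dirac x := by
          apply Lottery.ext'
          intro z
          by_cases h : z = x
          · subst h; simp [dirac, ← ha, haone]
          · have h1 : g z ≤ 1 - a := by
              have := single_le_finsum z hgsupp (fun z => by
                rw [hg]; dsimp only; by_cases h' : z = x <;> simp [h', p.nonneg z])
              rw [hgsum] at this
              exact this
            have h2 : 0 ≤ g z := by rw [hg]; dsimp only; rw [if_neg h]; exact p.nonneg z
            rw [haone] at h1
            have : g z = 0 := le_antisymm (by linarith) h2
            rw [hg] at this; dsimp only at this; rw [if_neg h] at this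
            simp [dirac, if_neg h, this]
        rw [hpd, hU]
        exact expUtility_dirac _ x
      · have ha1' : a < 1 := lt_of_le_of_ne ha1 haone
        -- residual lottery
        obtain ⟨q, hqprob⟩ : ∃ q : Lottery P, ∀ z, q.prob z = g z / (1 - a) := by
          refine ⟨⟨fun z => g z / (1 - a), fun z => div_nonneg (by
            rw [hg]; dsimp only; by_cases h' : z = x <;> simp [h', p.nonneg z]) (by linarith),
            hgsupp.subset (by
              intro z hz
              simp only [Function.mem_support] at hz ⊢
              intro h; exact hz (by rw [h, zero_div])), ?_⟩, fun z => rfl⟩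
          have e : ∀ z, g z / (1 - a) = g z * (1/(1-a)) := fun z => by ring
          rw [finsum_congr e, ← finsum_mul _ _, hgsum, mul_one_div]
          exact div_self (by linarith)
        have hdecomp : p = mix a (dirac x) q := by
          apply Lottery.ext'
          intro z
          rw [mix_prob hx0.le ha1, hqprob z]
          by_cases h : z = x
          · subst h
            simp only [dirac, hg]
            simp [← ha]
          · simp only [dirac, hg]
            rw [if_neg h, if_neg h]
            have h1a : (1:ℝ) - a ≠ 0 := by linarith
            field_simp
            ring
        -- support of q is strictly smaller
        have hcard : q.finite_support.toFinset.card ≤ n := by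
          have hss : q.finite_support.toFinset ⊂ p.finite_support.toFinset := by
            constructor
            · intro z hz
              rw [Set.Finite.mem_toFinset] at hz ⊢
              simp only [Function.mem_support, hqprob z, hg] at hz
              simp only [Function.mem_support]
              intro h
              apply hz
              split <;> simp [h]
            · intro hsub
              have hxp : x ∈ p.finite_support.toFinset := by
                rw [Set.Finite.mem_toFinset]; exact hx
              have hxq := hsub hxp
              rw [Set.Finite.mem_toFinset] at hxq
              simp only [Function.mem_support, hqprob x, hg] at hxq
              apply hxq
              simp
          have := Finset.card_lt_card hss
          omega
        have hih := ih q hcard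
        rw [hdecomp, expUtility_mix U hx0.le ha1, haff a (dirac x) q hx0.le ha1, hih, hU,
          expUtility_dirac]
  exact fun p => main _ p le_rfl

end VNM

/-- The von Neumann–Morgenstern expected utility theorem: a preference relation on
lotteries over prospects satisfying asymmetry, negative transitivity, independence
and continuity is represented by the expectation of a utility function `U` on
prospects, and `U` is unique up to positive affine transformation. -/
theorem vnm_expected_utility {P : Type*} (pref : Lottery P → Lottery P → Prop)
    (asymm : ∀ p q, pref p q → ¬ pref q p)
    (negTrans : ∀ p q r, ¬ pref p q → ¬ pref q r → ¬ pref p r)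
    (indep : ∀ (α : ℝ), 0 < α → α ≤ 1 → ∀ p q r mp mq,
      IsMix mp α p r → IsMix mq α q r → pref p q → pref mp mq)
    (cont : ∀ p q r, pref p q → pref q r →
      ∃ (α β : ℝ) (mα mβ : Lottery P), 0 < α ∧ α < 1 ∧ 0 < β ∧ β < 1 ∧
        IsMix mα α p r ∧ IsMix mβ β p r ∧ pref mα q ∧ pref q mβ) :
    ∃ U : P → ℝ,
      (∀ p q, pref p q ↔ expUtility U p > expUtility U q) ∧
      (∀ U' : P → ℝ,
        (∀ p q, pref p q ↔ expUtility U' p > expUtility U' q) ↔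
        ∃ a b : ℝ, 0 < b ∧ U' = fun x => a + b * U x) := by
  classical
  by_cases htriv : ∀ p q, ¬ pref p q
  · -- trivial preference: constant utility works
    refine ⟨fun _ => 0, ?_, ?_⟩
    · intro p q
      rw [VNM.expUtility_zero, VNM.expUtility_zero]
      exact iff_of_false (htriv p q) (lt_irrefl 0)
    · intro U'
      constructor
      · intro hrep
        have hconst : ∀ p q : Lottery P, expUtility U' p = expUtility U' q := by
          intro p q
          exact le_antisymm (not_lt.1 (fun h => htriv p q ((hrep p q).2 h)))
            (not_lt.1 (fun h => htriv q p ((hrep q p).2 h)))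
        by_cases hP : Nonempty P
        · obtain ⟨x0⟩ := hP
          refine ⟨U' x0, 1, one_pos, funext fun x => ?_⟩
          have h := hconst (VNM.dirac x) (VNM.dirac x0)
          rw [VNM.expUtility_dirac, VNM.expUtility_dirac] at h
          rw [h]; ring
        · exact ⟨0, 1, one_pos, funext fun x => absurd ⟨x⟩ hP⟩
      · rintro ⟨a, b, hb, rfl⟩
        intro p q
        rw [VNM.expUtility_affine, VNM.expUtility_affine, VNM.expUtility_zero p,
          VNM.expUtility_zero q]
        exact iff_of_false (htriv p q) (lt_irrefl _)
  · -- nontrivial preference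
    push_neg at htriv
    obtain ⟨L1, L0, h01⟩ := htriv
    obtain ⟨u, hu_ord, hu_aff, hu0, hu1⟩ := VNM.exists_u asymm negTrans indep cont h01
    have hrep := VNM.exp_rep hu_aff
    refine ⟨fun x => u (VNM.dirac x), ?_, ?_⟩
    · intro p q
      rw [hrep p, hrep q]
      exact hu_ord p q
    · intro U'
      constructor
      · intro hrep'
        have hv_aff : ∀ (γ : ℝ) (q r : Lottery P), 0 ≤ γ → γ ≤ 1 →
            expUtility U' (VNM.mix γ q r)
              = γ * expUtility U' q + (1 - γ) * expUtility U' r :=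
          fun γ q r h0 h1 => VNM.expUtility_mix U' h0 h1 q r
        have hq := VNM.unique_affine asymm negTrans h01 hu_ord hu_aff hu0 hu1 hrep' hv_aff
        refine ⟨expUtility U' L0, expUtility U' L1 - expUtility U' L0, ?_, funext fun x => ?_⟩
        · have := (hrep' L1 L0).1 h01
          linarith
        · have h := hq (VNM.dirac x)
          rw [VNM.expUtility_dirac] at h
          exact h
      · rintro ⟨a, b, hb, rfl⟩
        intro p q
        rw [VNM.expUtility_affine, VNM.expUtility_affine, hrep p, hrep q]
        constructor
        · intro h
          have := (hu_ord p q).1 h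
          simp only [gt_iff_lt]
          nlinarith
        · intro h
          apply (hu_ord p q).2
          simp only [gt_iff_lt] at h
          nlinarith
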